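/- For every integer i ≥ 1 there exists a unique positive real number s such that max{f_{i+2}, φ f_{i+1}}^s = max{f_{i+1}, φ f_i}^s + max{f_i, φ f_{i-1}}^s; moreover, denoting this number by s_i, the sequence (s_i)_{i=1}^∞ is strictly decreasing, satisfies s_i > 1 for all i, and converges to 1 as i → ∞. -/

import Mathlib

set_option maxHeartbeats 1000000

/-- fibMax i = max{f_i, φ f_{i-1}} with φ = (1+√5)/2. -/
noncomputable def fibMax (i : ℕ) : ℝ :=
  max (Nat.fib i : ℝ) (((1 + Real.sqrt 5) / 2) * (Nat.fib (i - 1) : ℝ))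

namespace Stmt18Aux


noncomputable def ph : ℝ := (1 + Real.sqrt 5) / 2

noncomputable def F (m : ℕ) : ℝ := (Nat.fib m : ℝ)

lemma sqrt5_sq : Real.sqrt 5 ^ 2 = 5 := Real.sq_sqrt (by norm_num)
lemma sqrt5_nonneg : 0 ≤ Real.sqrt 5 := Real.sqrt_nonneg 5
lemma sqrt5_gt : 2.236 < Real.sqrt 5 := by nlinarith [sqrt5_sq, sqrt5_nonneg]
lemma sqrt5_lt : Real.sqrt 5 < 2.2361 := by nlinarith [sqrt5_sq, sqrt5_nonneg]

lemma ph_sq : ph ^ 2 = ph + 1 := by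
  unfold ph; nlinarith [sqrt5_sq]

lemma one_lt_ph : 1 < ph := by unfold ph; nlinarith [sqrt5_gt]
lemma ph_pos : 0 < ph := lt_trans one_pos one_lt_ph
lemma ph_gt : 1.61 < ph := by unfold ph; nlinarith [sqrt5_gt]
lemma ph_lt : ph < 1.62 := by unfold ph; nlinarith [sqrt5_lt]

lemma ph_inv : ph⁻¹ = ph - 1 := by
  have h : ph * (ph - 1) = 1 := by nlinarith [ph_sq]
  exact inv_eq_of_mul_eq_one_right h

lemma ph_mul_inv : ph * ph⁻¹ = 1 := mul_inv_cancel₀ ph_pos.ne'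
lemma phinv_pos : 0 < ph⁻¹ := inv_pos.2 ph_pos
lemma phinv_lt_one : ph⁻¹ < 1 := by rw [ph_inv]; nlinarith [ph_lt, ph_gt]
lemma phinv_lt : ph⁻¹ < 0.622 := by rw [ph_inv]; nlinarith [ph_lt]

lemma F_nonneg (m : ℕ) : 0 ≤ F m := Nat.cast_nonneg _
lemma F_one_le {m : ℕ} (hm : 1 ≤ m) : 1 ≤ F m := by
  have h : 1 ≤ Nat.fib m := Nat.fib_pos.2 (by omega)
  unfold F; exact_mod_cast h
lemma F_pos {m : ℕ} (hm : 1 ≤ m) : 0 < F m := lt_of_lt_of_le one_pos (F_one_le hm)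
lemma F_mono {a b : ℕ} (h : a ≤ b) : F a ≤ F b := by
  unfold F; exact_mod_cast Nat.fib_mono h
lemma F_add_two (m : ℕ) : F (m + 2) = F m + F (m + 1) := by
  unfold F; exact_mod_cast congrArg (Nat.cast : ℕ → ℝ) (Nat.fib_add_two)

/-- Key identity: φ·f m = f (m+1) + (-1)^(m+1)·φ⁻¹^m. -/
lemma phi_fib : ∀ m : ℕ, ph * F m = F (m + 1) + (-1 : ℝ) ^ (m + 1) * ph⁻¹ ^ m := by
  intro m
  induction m with
  | zero => simp [F]
  | succ m ih =>
    have hq : ph⁻¹ = ph - 1 := ph_inv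
    have hsq : ph ^ 2 = ph + 1 := ph_sq
    rw [show m + 1 + 1 = m + 2 from rfl, F_add_two]
    linear_combination (1 - ph) * ih + (F m) * hsq - ((-1 : ℝ) ^ m * ph⁻¹ ^ m) * hq

lemma phi_sq_fib (m : ℕ) : ph ^ 2 * F m = F (m + 2) + (-1 : ℝ) ^ (m + 1) * ph⁻¹ ^ m := by
  have h1 := phi_fib m
  have h2 := phi_fib (m + 1)
  have hq : ph⁻¹ = ph - 1 := ph_inv
  rw [show m + 1 + 1 = m + 2 from rfl] at h2
  linear_combination ph * h1 + h2 - ((-1 : ℝ) ^ (m + 1) * ph⁻¹ ^ m) * hq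

lemma fib_le_ph_pow : ∀ m : ℕ, F (m + 1) ≤ ph ^ m := by
  intro m
  induction m using Nat.twoStepInduction with
  | zero => simp [F]
  | one => simpa [F] using one_lt_ph.le
  | more m ih1 ih2 =>
    rw [show m + 2 + 1 = m + 1 + 2 from rfl, F_add_two]
    have h : ph ^ (m + 2) = ph ^ m + ph ^ (m + 1) := by
      have : ph ^ (m + 2) = ph ^ m * ph ^ 2 := by ring
      rw [this, ph_sq]; ring
    rw [h]
    exact add_le_add ih1 ih2

lemma cassini : ∀ k : ℕ, (Nat.fib k : ℤ) ^ 2 + Nat.fib k * Nat.fib (k + 1) - Nat.fib (k + 1) ^ 2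
    = (-1 : ℤ) ^ (k + 1) := by
  intro k
  induction k with
  | zero => simp
  | succ k ih =>
    have h : (Nat.fib (k + 2) : ℤ) = Nat.fib k + Nat.fib (k + 1) := by exact_mod_cast Nat.fib_add_two
    rw [show k + 1 + 1 = k + 2 from rfl, h]
    ring_nf
    ring_nf at ih
    linear_combination -ih

/-- Catalan-type identity, odd case: f k · f (k+4) = f (k+2)² + 1. -/
lemma cat4 {k : ℕ} (hk : Odd k) : F k * F (k + 4) = F (k + 2) ^ 2 + 1 := by
  have h := cassini k
  have hsgn : (-1 : ℤ) ^ (k + 1) = 1 := Even.neg_one_pow (by simpa using hk.add_one)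
  rw [hsgn] at h
  have h2 : (Nat.fib (k + 2) : ℤ) = Nat.fib k + Nat.fib (k + 1) := by exact_mod_cast Nat.fib_add_two
  have h3 : (Nat.fib (k + 3) : ℤ) = Nat.fib (k + 1) + Nat.fib (k + 2) := by
    exact_mod_cast (Nat.fib_add_two (n := k + 1))
  have h4 : (Nat.fib (k + 4) : ℤ) = Nat.fib (k + 2) + Nat.fib (k + 3) := by
    exact_mod_cast (Nat.fib_add_two (n := k + 2))
  have hz : (Nat.fib k : ℤ) * Nat.fib (k + 4) = (Nat.fib (k + 2) : ℤ) ^ 2 + 1 := by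
    rw [h4, h3, h2]; linear_combination h
  unfold F; exact_mod_cast hz






lemma fibMax_eq (m : ℕ) : fibMax m = max (F m) (ph * F (m - 1)) := rfl

lemma fibMax_odd (k : ℕ) (hk : Even k) : fibMax (k + 1) = F (k + 1) := by
  rw [fibMax_eq, Nat.add_sub_cancel]
  have h := phi_fib k
  have hsgn : (-1 : ℝ) ^ (k + 1) = -1 := Odd.neg_one_pow (by simpa using hk.add_one)
  rw [hsgn] at h
  have : ph * F k ≤ F (k + 1) := by nlinarith [pow_pos phinv_pos k]
  exact max_eq_left this

lemma fibMax_even (k : ℕ) (hk : Odd k) : fibMax (k + 1) = ph * F k := by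
  rw [fibMax_eq, Nat.add_sub_cancel]
  have h := phi_fib k
  have hsgn : (-1 : ℝ) ^ (k + 1) = 1 := Even.neg_one_pow (by simpa using hk.add_one)
  rw [hsgn] at h
  have : F (k + 1) ≤ ph * F k := by nlinarith [pow_pos phinv_pos k]
  exact max_eq_right this

noncomputable def uu (i : ℕ) : ℝ := fibMax (i + 1) / fibMax (i + 2)
noncomputable def vv (i : ℕ) : ℝ := fibMax i / fibMax (i + 2)

lemma uv_even {k : ℕ} (hk : Even k) :
    uu (k + 1) = ph * F (k + 1) / F (k + 3) ∧ vv (k + 1) = F (k + 1) / F (k + 3) := by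
  have h1 : fibMax (k + 1) = F (k + 1) := fibMax_odd k hk
  have h2 : fibMax (k + 2) = ph * F (k + 1) := fibMax_even (k + 1) (by simpa using hk.add_one)
  have h3 : fibMax (k + 3) = F (k + 3) := fibMax_odd (k + 2) (by simpa using hk.add even_two)
  constructor
  · show fibMax (k + 2) / fibMax (k + 3) = _
    rw [h2, h3]
  · show fibMax (k + 1) / fibMax (k + 3) = _
    rw [h1, h3]

lemma uv_odd {k : ℕ} (hk : Odd k) :
    uu (k + 1) = ph⁻¹ ∧ vv (k + 1) = F k / F (k + 2) := by
  have hk1 : 1 ≤ k := hk.pos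
  have h1 : fibMax (k + 1) = ph * F k := fibMax_even k hk
  have h2 : fibMax (k + 2) = F (k + 2) := fibMax_odd (k + 1) (by simpa using hk.add_one)
  have h3 : fibMax (k + 3) = ph * F (k + 2) := fibMax_even (k + 2) (by
      obtain ⟨j, rfl⟩ := hk; exact ⟨j + 1, by ring⟩)
  have hne : F (k + 2) ≠ 0 := (F_pos (by omega)).ne'
  constructor
  · show fibMax (k + 2) / fibMax (k + 3) = _
    rw [h2, h3, mul_comm, ← div_div, div_self hne, one_div]
  · show fibMax (k + 1) / fibMax (k + 3) = _
    rw [h1, h3, mul_div_mul_left _ _ ph_pos.ne']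

lemma props {i : ℕ} (hi : 1 ≤ i) :
    0 < uu i ∧ uu i < 1 ∧ 0 < vv i ∧ vv i < 1 ∧ 1 < uu i + vv i ∧
    uu i + vv i ≤ 1 + ph⁻¹ ^ i ∧ uu i ^ 2 + vv i ^ 2 ≤ 0.91 := by
  obtain ⟨k, rfl⟩ : ∃ k, i = k + 1 := ⟨i - 1, by omega⟩
  have hq_pos : (0:ℝ) < ph⁻¹ ^ (k + 1) := pow_pos phinv_pos _
  have hq_lt1 : ph⁻¹ ^ (k + 1) < 1 := pow_lt_one₀ phinv_pos.le phinv_lt_one (by omega)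
  rcases Nat.even_or_odd k with hk | hk
  · -- i = k+1, k even : uu = ph·F(k+1)/F(k+3), vv = F(k+1)/F(k+3)
    obtain ⟨hu, hv⟩ := uv_even hk
    have hsgn : (-1 : ℝ) ^ (k + 1 + 1) = 1 := Even.neg_one_pow (by have := hk.add even_two; exact this)
    have e1 : ph * F (k + 1) = F (k + 2) + ph⁻¹ ^ (k + 1) := by
      have := phi_fib (k + 1); rwa [hsgn, one_mul] at this
    have e2 : ph ^ 2 * F (k + 1) = F (k + 3) + ph⁻¹ ^ (k + 1) := by
      have := phi_sq_fib (k + 1); rwa [hsgn, one_mul] at this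
    have hadd : F (k + 3) = F (k + 1) + F (k + 2) := F_add_two (k + 1)
    have hF1 : 1 ≤ F (k + 1) := F_one_le (by omega)
    have hF2 : 1 ≤ F (k + 2) := F_one_le (by omega)
    have hF12 : F (k + 1) ≤ F (k + 2) := F_mono (by omega)
    have hF3 : 0 < F (k + 3) := F_pos (by omega)
    have hF31 : 1 ≤ F (k + 3) := F_one_le (by omega)
    have hB : (0:ℝ) < ph * F (k + 1) := mul_pos ph_pos (by linarith)
    rw [hu, hv]
    refine ⟨div_pos hB hF3, ?_, div_pos (by linarith) hF3, ?_, ?_, ?_, ?_⟩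
    · rw [div_lt_one hF3]; linarith
    · rw [div_lt_one hF3]; linarith
    · rw [← add_div, lt_div_iff₀ hF3]; linarith
    · rw [← add_div, div_le_iff₀ hF3]; nlinarith
    · have hx2 : 2 * F (k + 1) ≤ F (k + 3) := by linarith
      have hx : F (k + 1) / F (k + 3) ≤ 1 / 2 := by
        rw [div_le_div_iff₀ hF3 (by norm_num)]; linarith
      have hx0 : 0 ≤ F (k + 1) / F (k + 3) := le_of_lt (div_pos (by linarith) hF3)
      rw [mul_div_assoc]
      set x := F (k + 1) / F (k + 3) with hxdef
      have : (ph * x) ^ 2 + x ^ 2 = (ph ^ 2 + 1) * x ^ 2 := by ring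
      rw [this, ph_sq]
      nlinarith [ph_lt, ph_gt]
  · -- i = k+1, k odd : uu = ph⁻¹, vv = F k/F(k+2)
    obtain ⟨hu, hv⟩ := uv_odd hk
    have hk1 : 1 ≤ k := hk.pos
    have hsgn : (-1 : ℝ) ^ (k + 1) = 1 := Even.neg_one_pow (by simpa using hk.add_one)
    have e3 : ph ^ 2 * F k = F (k + 2) + ph⁻¹ ^ k := by
      have := phi_sq_fib k; rwa [hsgn, one_mul] at this
    have hadd : F (k + 2) = F k + F (k + 1) := F_add_two k
    have hF0 : 1 ≤ F k := F_one_le (by omega)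
    have hF1 : 1 ≤ F (k + 1) := F_one_le (by omega)
    have hF01 : F k ≤ F (k + 1) := F_mono (by omega)
    have hF2 : 0 < F (k + 2) := F_pos (by omega)
    have hF21 : 1 ≤ F (k + 2) := F_one_le (by omega)
    have hqk : (0:ℝ) < ph⁻¹ ^ k := pow_pos phinv_pos _
    have hqq : ph⁻¹ ^ (k + 1) = ph⁻¹ ^ k * ph⁻¹ := pow_succ _ _
    rw [hu, hv]
    refine ⟨phinv_pos, phinv_lt_one, div_pos (by linarith) hF2, ?_, ?_, ?_, ?_⟩
    · rw [div_lt_one hF2]; linarith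
    · -- 1 < ph⁻¹ + F k / F (k+2)
      have h1 : ph ^ 2 * (2 - ph) = 1 := by linear_combination (1 - ph) * ph_sq
      have h2 : ph ^ 2 * ((2 - ph) * F (k + 2)) = F (k + 2) := by
        linear_combination (F (k + 2)) * h1
      have h3 : ph ^ 2 * ((2 - ph) * F (k + 2)) < ph ^ 2 * F k := by
        rw [h2]; linarith [e3, hqk]
      have h4 : (2 - ph) * F (k + 2) < F k := lt_of_mul_lt_mul_left h3 (by positivity)
      have h5 : 2 - ph < F k / F (k + 2) := (lt_div_iff₀ hF2).mpr h4
      rw [ph_inv]; linarith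
    · -- ph⁻¹ + F k / F (k+2) ≤ 1 + ph⁻¹^(k+1)
      have h1 : ph ^ 2 * (2 - ph) = 1 := by linear_combination (1 - ph) * ph_sq
      have h1' : ph ^ 2 * (1 - ph⁻¹) = 1 := by rw [ph_inv]; linear_combination h1
      have hphq : ph ^ 2 * ph⁻¹ = ph := by rw [sq, mul_assoc, ph_mul_inv, mul_one]
      have expand : ph ^ 2 * ((1 - ph⁻¹ + ph⁻¹ ^ (k + 1)) * F (k + 2))
          = F (k + 2) + ph * ph⁻¹ ^ k * F (k + 2) := by
        rw [pow_succ]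
        linear_combination (F (k + 2)) * h1' + (ph⁻¹ ^ k * F (k + 2)) * hphq
      have hphF : 1 ≤ ph * F (k + 2) := by nlinarith [one_lt_ph]
      have h6 : ph ^ 2 * F k ≤ F (k + 2) + ph * ph⁻¹ ^ k * F (k + 2) := by
        rw [e3]; nlinarith [hqk, hphF]
      have h7 : ph ^ 2 * F k ≤ ph ^ 2 * ((1 - ph⁻¹ + ph⁻¹ ^ (k + 1)) * F (k + 2)) := by
        rw [expand]; exact h6
      have h8 : F k ≤ (1 - ph⁻¹ + ph⁻¹ ^ (k + 1)) * F (k + 2) :=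
        le_of_mul_le_mul_left h7 (pow_pos ph_pos 2)
      have h9 : F k / F (k + 2) ≤ 1 - ph⁻¹ + ph⁻¹ ^ (k + 1) := (div_le_iff₀ hF2).mpr h8
      linarith
    · -- (ph⁻¹)² + v² ≤ 0.91
      have hx2 : 2 * F k ≤ F (k + 2) := by linarith
      have hx : F k / F (k + 2) ≤ 1 / 2 := by
        rw [div_le_div_iff₀ hF2 (by norm_num)]; linarith
      have hx0 : 0 ≤ F k / F (k + 2) := le_of_lt (div_pos (by linarith) hF2)
      have hq2 : ph⁻¹ ^ 2 = 2 - ph := by rw [ph_inv]; linear_combination ph_sq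
      nlinarith [ph_lt, ph_gt]

-- root machinery
lemma fibMax_pos {m : ℕ} (hm : 1 ≤ m) : 0 < fibMax m :=
  lt_of_lt_of_le (F_pos hm) (le_max_left _ _)
lemma fibMax_nonneg (m : ℕ) : 0 ≤ fibMax m := le_trans (F_nonneg m) (le_max_left _ _)

lemma sum_anti {u v : ℝ} (hu0 : 0 < u) (hu1 : u < 1) (hv0 : 0 < v) (hv1 : v < 1) :
    StrictAnti (fun t : ℝ => u ^ t + v ^ t) := fun _ _ hxy =>
  add_lt_add (Real.rpow_lt_rpow_of_exponent_gt hu0 hu1 hxy)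
    (Real.rpow_lt_rpow_of_exponent_gt hv0 hv1 hxy)

/-- If `u^σ+v^σ = 1` and the value at `τ` is `< 1` then `σ < τ`. -/
lemma root_lt {u v σ τ : ℝ} (hu0 : 0 < u) (hu1 : u < 1) (hv0 : 0 < v) (hv1 : v < 1)
    (hσ : u ^ σ + v ^ σ = 1) (hτ : u ^ τ + v ^ τ < 1) : σ < τ := by
  have h := (sum_anti hu0 hu1 hv0 hv1).lt_iff_gt (a := τ) (b := σ)
  exact h.mp (by simpa [hσ] using hτ)

lemma lt_root {u v σ τ : ℝ} (hu0 : 0 < u) (hu1 : u < 1) (hv0 : 0 < v) (hv1 : v < 1)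
    (hσ : u ^ σ + v ^ σ = 1) (hτ : 1 < u ^ τ + v ^ τ) : τ < σ := by
  have h := (sum_anti hu0 hu1 hv0 hv1).lt_iff_gt (a := σ) (b := τ)
  exact h.mp (by simpa [hσ] using hτ)

lemma cont_rpow {u : ℝ} (hu : u ≠ 0) : Continuous fun t : ℝ => u ^ t :=
  continuous_iff_continuousAt.mpr fun _ => Real.continuousAt_const_rpow hu

lemma exists_root {u v : ℝ} (hu0 : 0 < u) (hu1 : u < 1) (hv0 : 0 < v) (hv1 : v < 1)
    (hgt : 1 < u + v) : ∃ s : ℝ, 1 < s ∧ u ^ s + v ^ s = 1 := by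
  set f : ℝ → ℝ := fun t => u ^ t + v ^ t with hf
  have hcont : Continuous f := (cont_rpow hu0.ne').add (cont_rpow hv0.ne')
  have htend : Filter.Tendsto f Filter.atTop (nhds 0) := by
    have := (tendsto_rpow_atTop_of_base_lt_one u (by linarith) hu1).add
      (tendsto_rpow_atTop_of_base_lt_one v (by linarith) hv1)
    simpa using this
  have hev : ∀ᶠ t in Filter.atTop, f t < 1 :=
    htend.eventually (gt_mem_nhds (by norm_num : (0:ℝ) < 1))
  obtain ⟨T, hTlt, hT1⟩ := (hev.and (Filter.eventually_ge_atTop (1:ℝ))).exists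
  have hf1 : 1 < f 1 := by simpa [hf, Real.rpow_one] using hgt
  have hmem : (1:ℝ) ∈ Set.Icc (f T) (f 1) := ⟨hTlt.le, hf1.le⟩
  obtain ⟨s, hsIcc, hfs⟩ := intermediate_value_Icc' hT1 hcont.continuousOn hmem
  refine ⟨s, lt_of_le_of_ne hsIcc.1 fun h => ?_, hfs⟩
  rw [← h] at hfs; exact hf1.ne' hfs

lemma eq_norm {i : ℕ} (hi : 1 ≤ i) (s : ℝ) :
    (fibMax (i + 2) ^ s = fibMax (i + 1) ^ s + fibMax i ^ s) ↔ uu i ^ s + vv i ^ s = 1 := by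
  have hA : 0 < fibMax (i + 2) := fibMax_pos (by omega)
  have hApow : (0:ℝ) < fibMax (i + 2) ^ s := Real.rpow_pos_of_pos hA s
  rw [uu, vv, Real.div_rpow (fibMax_nonneg _) hA.le, Real.div_rpow (fibMax_nonneg _) hA.le,
    ← add_div, div_eq_one_iff_eq hApow.ne', eq_comm]

/-- Consecutive decrease of the roots. -/
lemma step_dec {i : ℕ} (hi : 1 ≤ i) {t t' : ℝ} (ht : uu i ^ t + vv i ^ t = 1)
    (ht' : uu (i + 1) ^ t' + vv (i + 1) ^ t' = 1) (h1 : 1 < t) (h2 : t < 2) : t' < t := by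
  have hprops' := props (i := i + 1) (by omega)
  obtain ⟨hu0', hu1', hv0', hv1', -, -, -⟩ := hprops'
  refine root_lt hu0' hu1' hv0' hv1' ht' ?_
  -- goal : uu (i+1) ^ t + vv (i+1) ^ t < 1
  obtain ⟨k, rfl⟩ : ∃ k, i = k + 1 := ⟨i - 1, by omega⟩
  have ht0 : (0:ℝ) < t := by linarith
  rcases Nat.even_or_odd k with hk | hk
  · -- k even, i = k+1 odd
    obtain ⟨hu, hv⟩ := uv_even hk
    obtain ⟨hu'0, hv'0⟩ := uv_odd (k := k + 1) (by simpa using hk.add_one)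
    have hu' : uu (k + 1 + 1) = ph⁻¹ := hu'0
    have hv' : vv (k + 1 + 1) = F (k + 1) / F (k + 3) := hv'0
    have hsgn : (-1 : ℝ) ^ (k + 1 + 1) = 1 := Even.neg_one_pow (by have := hk.add even_two; exact this)
    have e2 : ph ^ 2 * F (k + 1) = F (k + 3) + ph⁻¹ ^ (k + 1) := by
      have := phi_sq_fib (k + 1); rwa [hsgn, one_mul] at this
    have hF3 : 0 < F (k + 3) := F_pos (by omega)
    have hq_pos : (0:ℝ) < ph⁻¹ ^ (k + 1) := pow_pos phinv_pos _
    have hlt : ph⁻¹ < ph * F (k + 1) / F (k + 3) := by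
      rw [lt_div_iff₀ hF3]
      have hphq : ph ^ 2 * ph⁻¹ = ph := by rw [sq, mul_assoc, ph_mul_inv, mul_one]
      have hstep1 : ph⁻¹ * F (k + 3) < ph⁻¹ * (ph ^ 2 * F (k + 1)) := by
        apply mul_lt_mul_of_pos_left _ phinv_pos
        linarith
      have hstep2 : ph⁻¹ * (ph ^ 2 * F (k + 1)) = ph * F (k + 1) := by
        linear_combination (F (k + 1)) * hphq
      linarith
    rw [hu', hv']
    have hpow : ph⁻¹ ^ t < (ph * F (k + 1) / F (k + 3)) ^ t :=
      Real.rpow_lt_rpow phinv_pos.le hlt ht0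
    rw [hu, hv] at ht
    linarith
  · -- k odd, i = k+1 even : the hard case
    obtain ⟨hu, hv⟩ := uv_odd hk
    obtain ⟨hu'0, hv'0⟩ := uv_even (k := k + 1) (by simpa using hk.add_one)
    have hu' : uu (k + 1 + 1) = ph * F (k + 2) / F (k + 4) := hu'0
    have hv' : vv (k + 1 + 1) = F (k + 2) / F (k + 4) := hv'0
    have hk1 : 1 ≤ k := hk.pos
    set a := F (k + 2) with hadef
    set b := F (k + 4) with hbdef
    set c := F k with hcdef
    have ha : 0 < a := F_pos (by omega)
    have hb : 0 < b := F_pos (by omega)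
    have hc : 0 < c := F_pos (by omega)
    have hcas : c * b = a ^ 2 + 1 := cat4 hk
    have hsgn : (-1 : ℝ) ^ (k + 2 + 1) = 1 := Even.neg_one_pow (by
      obtain ⟨j, rfl⟩ := hk; exact ⟨j + 2, by ring⟩)
    have he : ph ^ 2 * a = b + ph⁻¹ ^ (k + 2) := by
      have := phi_sq_fib (k + 2); rwa [hsgn, one_mul] at this
    set q2 : ℝ := ph⁻¹ ^ (k + 2) with hq2def
    have hfb : a ≤ ph ^ (k + 1) := fib_le_ph_pow (k + 1)
    have hab : a < b := by
      have h4 : b = a + F (k + 3) := F_add_two (k + 2)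
      have := F_one_le (m := k + 3) (by omega)
      linarith
    set v : ℝ := c / a with hvdef
    set v' : ℝ := a / b with hv'def
    have hv'0 : 0 < v' := div_pos ha hb
    have hv'1 : v' < 1 := (div_lt_one hb).mpr hab
    have hv0 : 0 < v := div_pos hc ha
    set x : ℝ := ph ^ 2 * v' with hxdef
    have hq2pos : (0:ℝ) < q2 := pow_pos phinv_pos _
    have hx1 : 1 < x := by
      rw [hxdef, hv'def, ← mul_div_assoc, lt_div_iff₀ hb, one_mul]
      linarith [he, hq2pos]
    have hx0 : (0:ℝ) < x := by linarith
    -- rewrite the goal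
    have huu' : uu (k + 1 + 1) = ph * v' := by rw [hu', ← mul_div_assoc]
    rw [huu', hv']
    rw [hu, hv] at ht
    -- Bernoulli lower bound : v'^t + t*v'^t*((v-v')/v') ≤ v^t
    have hvpow : (0:ℝ) < v' ^ t := Real.rpow_pos_of_pos hv'0 t
    have b1 : v' ^ t + t * (v' ^ t * ((v - v') / v')) ≤ v ^ t := by
      have hs : (-1:ℝ) ≤ (v - v') / v' := by
        have : (v - v') / v' = v / v' - 1 := by field_simp
        rw [this]
        have : 0 < v / v' := div_pos hv0 hv'0
        linarith
      have hber := one_add_mul_self_le_rpow_one_add hs h1.le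
      rw [show (1:ℝ) + (v - v') / v' = v / v' by field_simp; ring] at hber
      rw [Real.div_rpow hv0.le hv'0.le] at hber
      have := mul_le_mul_of_nonneg_left hber hvpow.le
      rw [mul_div_cancel₀ _ hvpow.ne'] at this
      linarith [this]
    -- Bernoulli upper bound : x^t - 1 ≤ t*x^t*((x-1)/x)
    have hxpow : (0:ℝ) < x ^ t := Real.rpow_pos_of_pos hx0 t
    have b2 : x ^ t - 1 ≤ t * (x ^ t * ((x - 1) / x)) := by
      have hs : (-1:ℝ) ≤ x⁻¹ - 1 := by
        have : 0 < x⁻¹ := inv_pos.2 hx0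
        linarith
      have hber := one_add_mul_self_le_rpow_one_add hs h1.le
      rw [show (1:ℝ) + (x⁻¹ - 1) = x⁻¹ by ring, Real.inv_rpow hx0.le] at hber
      have hle := mul_le_mul_of_nonneg_left hber hxpow.le
      rw [mul_inv_cancel₀ hxpow.ne'] at hle
      -- hle : x^t * (1 + t * (x⁻¹ - 1)) ≤ 1
      have hre : x ^ t * (1 + t * (x⁻¹ - 1)) = x ^ t - t * (x ^ t * ((x - 1) / x)) := by
        field_simp
        ring
      rw [hre] at hle
      linarith
    -- factorizations of the two rpow products
    have hm1 : (ph * v') ^ t = ph⁻¹ ^ t * x ^ t := by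
      rw [← Real.mul_rpow phinv_pos.le hx0.le]
      congr 1
      rw [hxdef, ← mul_assoc, sq]
      rw [show ph⁻¹ * (ph * ph) = (ph⁻¹ * ph) * ph by ring, inv_mul_cancel₀ ph_pos.ne', one_mul]
    have hm2 : (ph * v') ^ t = ph ^ t * v' ^ t := Real.mul_rpow ph_pos.le hv'0.le
    have hqinvpow : (0:ℝ) < ph⁻¹ ^ t := Real.rpow_pos_of_pos phinv_pos t
    -- final scalar inequality : ph^t * ((x-1)/x) < (v - v')/v'
    have hphT : ph ^ t ≤ ph ^ 2 := by
      have h := Real.rpow_le_rpow_of_exponent_le one_lt_ph.le h2.le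
      rwa [show ((2:ℝ)) = ((2:ℕ):ℝ) by norm_num, Real.rpow_natCast] at h
    have hvv : (v - v') / v' = 1 / a ^ 2 := by
      rw [hvdef, hv'def]
      field_simp
      linear_combination hcas
    have hxfrac : (x - 1) / x = q2 / (ph ^ 2 * a) := by
      rw [hxdef, hv'def]
      have hphne : ph ≠ 0 := ph_pos.ne'
      field_simp
      linear_combination he
    have hqa : q2 * a < 1 := by
      have hmul : q2 * ph ^ (k + 1) = ph⁻¹ := by
        rw [hq2def]
        have h' : ph⁻¹ ^ (k + 2) * ph ^ (k + 1) = (ph⁻¹ * ph) ^ (k + 1) * ph⁻¹ := by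
          rw [mul_pow, pow_succ]; ring
        rw [h', inv_mul_cancel₀ ph_pos.ne', one_pow, one_mul]
      calc q2 * a ≤ q2 * ph ^ (k + 1) :=
            mul_le_mul_of_nonneg_left hfb hq2pos.le
        _ = ph⁻¹ := hmul
        _ < 1 := phinv_lt_one
    have hfin : ph ^ t * ((x - 1) / x) < (v - v') / v' := by
      rw [hxfrac, hvv]
      have hden : (0:ℝ) < ph ^ 2 * a := mul_pos (pow_pos ph_pos 2) ha
      have hstep : ph ^ t * (q2 / (ph ^ 2 * a)) ≤ ph ^ 2 * (q2 / (ph ^ 2 * a)) :=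
        mul_le_mul_of_nonneg_right hphT (le_of_lt (div_pos hq2pos hden))
      have heqv : ph ^ 2 * (q2 / (ph ^ 2 * a)) = q2 / a := by
        have hphne : ph ≠ 0 := ph_pos.ne'
        field_simp
      have hlast : q2 / a < 1 / a ^ 2 := by
        rw [div_lt_div_iff₀ ha (pow_pos ha 2)]
        have h := mul_lt_mul_of_pos_right hqa ha
        rw [one_mul] at h
        calc q2 * a ^ 2 = q2 * a * a := by ring
          _ < a := h
          _ = 1 * a := by ring
      linarith
    -- assemble
    have key : ph⁻¹ ^ t * x ^ t = ph ^ t * v' ^ t := by rw [← hm1, hm2]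
    have h' := mul_le_mul_of_nonneg_left b2 hqinvpow.le
    rw [mul_sub, mul_one] at h'
    -- h' : ph⁻¹^t * x^t - ph⁻¹^t ≤ ph⁻¹^t * (t * (x^t * ((x-1)/x)))
    have e : ph⁻¹ ^ t * (t * (x ^ t * ((x - 1) / x)))
        = t * (v' ^ t * (ph ^ t * ((x - 1) / x))) := by
      linear_combination (t * ((x - 1) / x)) * key
    rw [e] at h'
    have step5 : v' ^ t * (ph ^ t * ((x - 1) / x)) < v' ^ t * ((v - v') / v') :=
      mul_lt_mul_of_pos_left hfin hvpow
    have step6 : t * (v' ^ t * (ph ^ t * ((x - 1) / x))) < t * (v' ^ t * ((v - v') / v')) :=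
      mul_lt_mul_of_pos_left step5 ht0
    rw [hm1]
    linarith [h', step6, b1, ht]

/-- Upper bound for the root, used for the limit. -/
lemma upper {i : ℕ} (hi : 6 ≤ i) {t : ℝ} (ht : uu i ^ t + vv i ^ t = 1) :
    t < 1 + 12 * ph⁻¹ ^ i := by
  obtain ⟨hu0, hu1, hv0, hv1, hgt, hsum, hsq⟩ := props (i := i) (by omega)
  set u := uu i
  set v := vv i
  set θ : ℝ := 12 * ph⁻¹ ^ i with hθdef
  have hqi : (0:ℝ) < ph⁻¹ ^ i := pow_pos phinv_pos i
  have hθ0 : 0 < θ := by positivity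
  have hθ1 : θ ≤ 1 := by
    have h1 : ph⁻¹ ^ i ≤ ph⁻¹ ^ 6 := pow_le_pow_of_le_one phinv_pos.le phinv_lt_one.le hi
    have h2 : ph⁻¹ ^ 6 ≤ (0.622:ℝ) ^ 6 := pow_le_pow_left₀ phinv_pos.le phinv_lt.le 6
    have : (12:ℝ) * (0.622:ℝ) ^ 6 ≤ 1 := by norm_num
    nlinarith
  have hber : ∀ w : ℝ, 0 < w → w ^ (1 + θ) ≤ w * (1 + θ * (w - 1)) := by
    intro w hw
    have h1 : w ^ (1 + θ) = w * w ^ θ := by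
      rw [Real.rpow_add hw, Real.rpow_one]
    have h2 : w ^ θ ≤ 1 + θ * (w - 1) := by
      have := rpow_one_add_le_one_add_mul_self (s := w - 1) (by linarith) hθ0.le hθ1
      rwa [show (1:ℝ) + (w - 1) = w by ring] at this
    rw [h1]
    exact mul_le_mul_of_nonneg_left h2 hw.le
  have hu' := hber u hu0
  have hv' := hber v hv0
  have hval : u ^ (1 + θ) + v ^ (1 + θ) < 1 := by
    have hexp : u * (1 + θ * (u - 1)) + v * (1 + θ * (v - 1))
        = (u + v) + θ * ((u ^ 2 + v ^ 2) - (u + v)) := by ring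
    have hkey : (u + v) + θ * ((u ^ 2 + v ^ 2) - (u + v)) < 1 := by
      have hneg : (u ^ 2 + v ^ 2) - (u + v) ≤ -(0.09 : ℝ) := by linarith
      have := mul_le_mul_of_nonneg_left hneg hθ0.le
      have hθq : θ * (0.09:ℝ) = 1.08 * ph⁻¹ ^ i := by rw [hθdef]; ring
      nlinarith [hqi]
    linarith [hu', hv', hexp, hkey]
  exact root_lt hu0 hu1 hv0 hv1 ht hval

end Stmt18Aux

open Stmt18Aux in
/-- For every integer i ≥ 1 there exists a unique positive real s with
max{f_{i+2}, φ f_{i+1}}^s = max{f_{i+1}, φ f_i}^s + max{f_i, φ f_{i-1}}^s; and for any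
choice s_i of these numbers, the sequence (s_i)_{i ≥ 1} is strictly decreasing,
satisfies s_i > 1 for all i ≥ 1, and converges to 1 as i → ∞. -/
theorem stmt18 :
    (∀ i : ℕ, 1 ≤ i → ∃! s : ℝ, 0 < s ∧
      fibMax (i + 2) ^ s = fibMax (i + 1) ^ s + fibMax i ^ s)
    ∧ ∀ s : ℕ → ℝ,
        (∀ i : ℕ, 1 ≤ i → 0 < s i ∧
          fibMax (i + 2) ^ (s i) = fibMax (i + 1) ^ (s i) + fibMax i ^ (s i)) →
        ((∀ i j : ℕ, 1 ≤ i → i < j → s j < s i)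
          ∧ (∀ i : ℕ, 1 ≤ i → 1 < s i)
          ∧ Filter.Tendsto s Filter.atTop (nhds 1)) := by
  constructor
  · intro i hi
    obtain ⟨hu0, hu1, hv0, hv1, hgt, -, -⟩ := props hi
    have hgt1 : 1 < uu i + vv i := hgt
    obtain ⟨σ, hσ1, hσeq⟩ := exists_root hu0 hu1 hv0 hv1 hgt1
    refine ⟨σ, ⟨by linarith, (eq_norm hi σ).mpr hσeq⟩, ?_⟩
    rintro σ' ⟨hσ'0, hσ'eq⟩
    have h1 := (eq_norm hi σ').mp hσ'eq
    exact (sum_anti hu0 hu1 hv0 hv1).injective (h1.trans hσeq.symm)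
  · intro s hs
    have heq : ∀ i, 1 ≤ i → uu i ^ s i + vv i ^ s i = 1 := fun i hi =>
      (eq_norm hi (s i)).mp (hs i hi).2
    have hone : ∀ i, 1 ≤ i → 1 < s i := by
      intro i hi
      obtain ⟨hu0, hu1, hv0, hv1, hgt, -, -⟩ := props hi
      refine lt_root hu0 hu1 hv0 hv1 (heq i hi) ?_
      rwa [Real.rpow_one, Real.rpow_one]
    have htwo : ∀ i, 1 ≤ i → s i < 2 := by
      intro i hi
      obtain ⟨hu0, hu1, hv0, hv1, -, -, hsq⟩ := props hi
      refine root_lt hu0 hu1 hv0 hv1 (heq i hi) ?_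
      have h2 : (2:ℝ) = ((2:ℕ):ℝ) := by norm_num
      rw [h2, Real.rpow_natCast, Real.rpow_natCast]
      linarith
    have hstep : ∀ i, 1 ≤ i → s (i + 1) < s i := fun i hi =>
      step_dec hi (heq i hi) (heq (i + 1) (by omega)) (hone i hi) (htwo i hi)
    refine ⟨?_, hone, ?_⟩
    · intro i j hi hij
      induction j with
      | zero => omega
      | succ j ih =>
        rcases Nat.lt_or_ge i j with h | h
        · exact lt_trans (hstep j (by omega)) (ih h)
        · have : i = j := by omega
          subst this
          exact hstep i hi
    · -- Tendsto
      have hub : ∀ i : ℕ, 6 ≤ i → s i ≤ 1 + 12 * ph⁻¹ ^ i := fun i h6 =>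
        (upper h6 (heq i (by omega))).le
      have hq0 : (0:ℝ) ≤ ph⁻¹ := phinv_pos.le
      have hlim : Filter.Tendsto (fun i : ℕ => 1 + 12 * ph⁻¹ ^ i) Filter.atTop (nhds 1) := by
        have h := (tendsto_pow_atTop_nhds_zero_of_lt_one hq0 phinv_lt_one).const_mul (12:ℝ)
        have h' := tendsto_const_nhds (x := (1:ℝ)) (f := Filter.atTop (α := ℕ)) |>.add h
        simpa using h'
      refine tendsto_of_tendsto_of_tendsto_of_le_of_le' tendsto_const_nhds hlim ?_ ?_
      · filter_upwards [Filter.eventually_ge_atTop 1] with i hi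
        exact (hone i hi).le
      · filter_upwards [Filter.eventually_ge_atTop 6] with i hi
        exact hub i hi
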